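/- For every octonion v with Re(v) = 0, the map W_v(x) = (x·v - i·((i·x)·v))/2 satisfies W_v(1) = v and is invariant under the octonionic circle action: W_v(e^{iφ}·x) = e^{iφ}·W_v(x) for all x ∈ 𝕆 and all φ ∈ ℝ. -/

import Mathlib

noncomputable section

/-- The octonions, realized as pairs of quaternions via the Cayley–Dickson construction. -/
abbrev Octonion := Quaternion ℝ × Quaternion ℝ

/-- Cayley–Dickson multiplication on `ℍ × ℍ`. -/
def omul (x y : Octonion) : Octonion :=
  (x.1 * y.1 - star y.2 * x.2, y.2 * x.1 + x.2 * star y.1)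

/-- Octonionic conjugation. -/
def oconj (x : Octonion) : Octonion := (star x.1, -x.2)

/-- The Euclidean norm of `ℝ⁸` on the octonions. -/
def onorm (x : Octonion) : ℝ := Real.sqrt (‖x.1‖ ^ 2 + ‖x.2‖ ^ 2)

/-- The Euclidean inner product of `ℝ⁸` on the octonions. -/
def oinner (x y : Octonion) : ℝ := (inner ℝ x.1 y.1 : ℝ) + (inner ℝ x.2 y.2 : ℝ)

/-- The embedding of the complex numbers into the quaternions (span of 1 and i). -/
def cH (a : ℂ) : Quaternion ℝ := ⟨a.re, a.im, 0, 0⟩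

/-- The embedding of the complex numbers into the octonions. -/
def cO (a : ℂ) : Octonion := (cH a, 0)

/-- `i = e₁` as an octonion. -/
def oI : Octonion := ((⟨0,1,0,0⟩ : Quaternion ℝ), 0)

/-- The Hopf-symmetrized translational vector field associated to `v`. -/
def Wfield (v : Octonion) (x : Octonion) : Octonion :=
  (1 / 2 : ℝ) • (omul x v - omul oI (omul (omul oI x) v))

lemma oI_fst_re : oI.1.re = 0 := rfl
lemma oI_fst_imI : oI.1.imI = 1 := rfl
lemma oI_fst_imJ : oI.1.imJ = 0 := rfl
lemma oI_fst_imK : oI.1.imK = 0 := rfl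
lemma oI_snd : oI.2 = 0 := rfl
lemma cH_re (a : ℂ) : (cH a).re = a.re := rfl
lemma cH_imI (a : ℂ) : (cH a).imI = a.im := rfl
lemma cH_imJ (a : ℂ) : (cH a).imJ = 0 := rfl
lemma cH_imK (a : ℂ) : (cH a).imK = 0 := rfl
lemma cO_fst (a : ℂ) : (cO a).1 = cH a := rfl
lemma cO_snd (a : ℂ) : (cO a).2 = 0 := rfl

lemma omul_oI_oI (y : Octonion) : omul oI (omul oI y) = -y := by
  simp only [omul, Prod.ext_iff]
  constructor <;> ext <;>
    simp [Quaternion.ext_iff, Quaternion.re_mul, Quaternion.imI_mul, Quaternion.imJ_mul, Quaternion.imK_mul, oI_fst_re, oI_fst_imI, oI_fst_imJ, oI_fst_imK, oI_snd, cH_re, cH_imI, cH_imJ, cH_imK, cO_fst, cO_snd] <;> ring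

lemma cO_decomp (a : ℂ) (x : Octonion) :
    omul (cO a) x = a.re • x + a.im • omul oI x := by
  simp only [omul, cO_fst, cO_snd, Prod.ext_iff, Prod.smul_fst, Prod.smul_snd]
  constructor <;> ext <;> simp [Quaternion.ext_iff, Quaternion.re_mul, Quaternion.imI_mul, Quaternion.imJ_mul, Quaternion.imK_mul, oI_fst_re, oI_fst_imI, oI_fst_imJ, oI_fst_imK, oI_snd, cH_re, cH_imI, cH_imJ, cH_imK, cO_fst, cO_snd] <;> ring

lemma omul_smul_left (r : ℝ) (x y : Octonion) : omul (r • x) y = r • omul x y := by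
  simp [omul, Prod.ext_iff, smul_sub, smul_add, mul_smul_comm, smul_mul_assoc]

lemma omul_smul_right (r : ℝ) (x y : Octonion) : omul x (r • y) = r • omul x y := by
  simp [omul, Prod.ext_iff, smul_sub, smul_add, mul_smul_comm, smul_mul_assoc]

lemma omul_add_left (x y z : Octonion) : omul (x + y) z = omul x z + omul y z := by
  simp only [omul, Prod.ext_iff, Prod.fst_add, Prod.snd_add]
  constructor <;> noncomm_ring

lemma omul_sub_right (x y z : Octonion) : omul x (y - z) = omul x y - omul x z := by
  simp only [omul, Prod.ext_iff, Prod.fst_sub, Prod.snd_sub, star_sub]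
  constructor <;> noncomm_ring

lemma omul_neg_left (x y : Octonion) : omul (-x) y = -omul x y := by
  simp only [omul, Prod.ext_iff, Prod.fst_neg, Prod.snd_neg]
  constructor <;> noncomm_ring

lemma omul_add_right (x y z : Octonion) : omul x (y + z) = omul x y + omul x z := by
  simp only [omul, Prod.ext_iff, Prod.fst_add, Prod.snd_add, star_add]
  constructor <;> noncomm_ring

lemma omul_neg_right (x y : Octonion) : omul x (-y) = -omul x y := by
  simp only [omul, Prod.ext_iff, Prod.fst_neg, Prod.snd_neg, star_neg]
  constructor <;> noncomm_ring

lemma Wfield_smul (v : Octonion) (r : ℝ) (x : Octonion) :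
    Wfield v (r • x) = r • Wfield v x := by
  simp only [Wfield, omul_smul_left, omul_smul_right, smul_sub]
  module

lemma Wfield_oI (v : Octonion) (x : Octonion) :
    Wfield v (omul oI x) = omul oI (Wfield v x) := by
  simp only [Wfield, omul_oI_oI, omul_neg_left, omul_neg_right, omul_smul_right,
    omul_sub_right, omul_oI_oI]
  congr 1
  abel

theorem octonion_Wfield_hopf_invariant (v : Octonion) (hv : v.1.re = 0) :
    Wfield v (1, 0) = v ∧
    ∀ (x : Octonion) (φ : ℝ),
      Wfield v (omul (cO (Complex.exp (φ * Complex.I))) x) =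
        omul (cO (Complex.exp (φ * Complex.I))) (Wfield v x) := by
  constructor
  · have h1 : omul ((1 : Quaternion ℝ), (0 : Quaternion ℝ)) v = v := by
      simp [omul]
    have h2 : omul oI ((1 : Quaternion ℝ), (0 : Quaternion ℝ)) = oI := by
      simp [omul, Prod.ext_iff, oI_snd]
    rw [Wfield, h1, h2, omul_oI_oI, sub_neg_eq_add]
    rw [show v + v = (2:ℝ) • v by rw [two_smul]]
    rw [smul_smul]; norm_num
  · intro x φ
    rw [cO_decomp]
    have hadd : ∀ y z : Octonion, Wfield v (y + z) = Wfield v y + Wfield v z := by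
      intro y z
      simp only [Wfield, omul_add_left, omul_add_right]
      module
    rw [hadd, Wfield_smul, Wfield_smul, Wfield_oI, cO_decomp]
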